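/- arXiv:2207.08965 — 3 statements merged into one kernel-verified Lean document; each statement's English description precedes it below -/
import Mathlib

section
/- Let P be a flow-based polytope whose edge set E is connected when viewed as a set of undirected edges. Then for every root r ∈ [n] and every x ∈ P with x_e ∈ (0,1) for all e ∈ E, one has ∑_{f vertex of P} P_{f,r}(x) > 0. -/
open Finset

open scoped Classical

/-- The set `E₀` of non-loop directed edges on vertex set `Fin n`. -/
def E0 (n : ℕ) : Finset (Fin n × Fin n) :=
  Finset.univ.filter (fun e => e.1 ≠ e.2)

/-- The reverse of a directed edge. -/
def rev {n : ℕ} (e : Fin n × Fin n) : Fin n × Fin n := (e.2, e.1)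

/-- The underlying undirected (simple) graph of a set of directed edges. -/
def undirGraph (n : ℕ) (D : Finset (Fin n × Fin n)) : SimpleGraph (Fin n) where
  Adj u v := u ≠ v ∧ ((u, v) ∈ D ∨ (v, u) ∈ D)
  symm := ⟨fun u v h => ⟨h.1.symm, h.2.symm⟩⟩
  loopless := ⟨fun u h => h.1 rfl⟩

lemma undirGraph_adj (n : ℕ) (D : Finset (Fin n × Fin n)) (u v : Fin n) :
    (undirGraph n D).Adj u v ↔ u ≠ v ∧ ((u, v) ∈ D ∨ (v, u) ∈ D) := Iff.rfl

/-- There is a directed walk from `i` to `j` using only edges in `D`. -/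
def reachesIn (n : ℕ) (D : Finset (Fin n × Fin n)) (i j : Fin n) : Prop :=
  Relation.ReflTransGen (fun a b => (a, b) ∈ D) i j

/-- `T` is a directed tree: `n-1` non-loop directed edges whose underlying
undirected edges form a spanning tree of `Fin n`. -/
def IsDirTree (n : ℕ) (T : Finset (Fin n × Fin n)) : Prop :=
  T ⊆ E0 n ∧ T.card = n - 1 ∧ (undirGraph n T).Connected

/-- `A` is an arborescence rooted at `r`: a directed tree such that from every
vertex there is a directed walk to `r` using only edges of `A`. -/
def IsArb (n : ℕ) (r : Fin n) (A : Finset (Fin n × Fin n)) : Prop :=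
  IsDirTree n A ∧ ∀ v : Fin n, reachesIn n A v r

/-- `Flip_f` of a single edge: reverse the edge iff `f e = 1`. -/
noncomputable def flipEdge (n : ℕ) (f : Fin n × Fin n → ℝ) (e : Fin n × Fin n) :
    Fin n × Fin n :=
  if f e = 1 then rev e else e

/-- `Flip_f` of a set of edges. -/
noncomputable def flipSet (n : ℕ) (f : Fin n × Fin n → ℝ)
    (T : Finset (Fin n × Fin n)) : Finset (Fin n × Fin n) :=
  T.image (flipEdge n f)

/-- Membership in the flow-based polytope with variable edge set `E` and
demands `d` (points are extended by zero outside `E`). -/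
def memFlowPolytope (n : ℕ) (E : Finset (Fin n × Fin n)) (d : Fin n → ℤ)
    (x : Fin n × Fin n → ℝ) : Prop :=
  (∀ e, e ∉ E → x e = 0) ∧ (∀ e ∈ E, x e ∈ Set.Icc (0 : ℝ) 1) ∧
    ∀ v : Fin n, (∑ i, x (v, i)) - (∑ i, x (i, v)) = (d v : ℝ)

/-- A vertex of the flow-based polytope: a 0/1 point of the polytope. -/
def IsVertex (n : ℕ) (E : Finset (Fin n × Fin n)) (d : Fin n → ℤ)
    (f : Fin n × Fin n → ℝ) : Prop :=
  memFlowPolytope n E d f ∧ ∀ e ∈ E, f e = 0 ∨ f e = 1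

/-- The 0/1 indicator of a set of edges. -/
def ind (n : ℕ) (S : Finset (Fin n × Fin n)) : Fin n × Fin n → ℝ :=
  fun e => if e ∈ S then 1 else 0

/-- The vertices of the flow-based polytope, encoded by their supports
(sets of edges carrying flow `1`). -/
noncomputable def flowVertices (n : ℕ) (E : Finset (Fin n × Fin n)) (d : Fin n → ℤ) :
    Finset (Finset (Fin n × Fin n)) :=
  Finset.univ.filter (fun S => S ⊆ E ∧ memFlowPolytope n E d (ind n S))

/-- The polynomial `P_{f,r}(x)` of the Bernoulli factory. Since `f` is 0/1,
`x_e^{f_e}(1-x_e)^{1-f_e}` is `x_e` if `f_e = 1` and `1 - x_e` otherwise, and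
`x_e^{1-f_e}(1-x_e)^{f_e}` is `1 - x_e` if `f_e = 1` and `x_e` otherwise. -/
noncomputable def Pfr (n : ℕ) (E : Finset (Fin n × Fin n))
    (f : Fin n × Fin n → ℝ) (r : Fin n) (x : Fin n × Fin n → ℝ) : ℝ :=
  (∏ e ∈ E, if f e = 1 then x e else 1 - x e) *
    ∑ T ∈ Finset.univ.filter
        (fun T : Finset (Fin n × Fin n) =>
          IsDirTree n T ∧ T ⊆ E ∧ IsArb n r (flipSet n f T)),
      ∏ e ∈ T, (if f e = 1 then 1 - x e else x e)

/-- Membership in the circulation hyperplane `Circ̄`. -/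
def memCircBar (n : ℕ) (y : Fin n × Fin n → ℝ) : Prop :=
  ∀ v : Fin n,
    (∑ i ∈ Finset.univ.filter (fun i => i ≠ v), y (v, i)) -
      (∑ i ∈ Finset.univ.filter (fun i => i ≠ v), y (i, v)) = 0

/-- The arborescence-generating polynomial `SArb_r(y)`. -/
noncomputable def SArb (n : ℕ) (r : Fin n) (y : Fin n × Fin n → ℝ) : ℝ :=
  ∑ A ∈ Finset.univ.filter (fun A : Finset (Fin n × Fin n) => IsArb n r A),
    ∏ e ∈ A, y e

/-- The map `M_f`: `M_f(x)_e = x_e (1 - f_e) + (1 - x_ē) f_ē`. -/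
def Mf (n : ℕ) (f x : Fin n × Fin n → ℝ) : Fin n × Fin n → ℝ :=
  fun e => x e * (1 - f e) + (1 - x (rev e)) * f (rev e)

noncomputable def divg (n : ℕ) (g : Fin n × Fin n → ℝ) (v : Fin n) : ℝ :=
  (∑ i, g (v, i)) - (∑ i, g (i, v))

lemma sum_divg_zero (n : ℕ) (g : Fin n × Fin n → ℝ) : ∑ v, divg n g v = 0 := by
  unfold divg
  rw [Finset.sum_sub_distrib]
  rw [Finset.sum_comm (f := fun v i => g (i, v))]
  simp

lemma sum_fst_eq (n : ℕ) (g : Fin n × Fin n → ℝ) (v : Fin n) :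
    ∑ e ∈ Finset.univ ×ˢ Finset.univ, (if e.1 = v then g e else 0) = ∑ i, g (v, i) := by
  rw [Finset.sum_product]
  rw [Finset.sum_eq_single_of_mem v (Finset.mem_univ v)]
  · simp
  · intro b _ hb
    simp [hb]

lemma sum_snd_eq (n : ℕ) (g : Fin n × Fin n → ℝ) (v : Fin n) :
    ∑ e ∈ Finset.univ ×ˢ Finset.univ, (if e.2 = v then g e else 0) = ∑ i, g (i, v) := by
  rw [Finset.sum_product_right]
  rw [Finset.sum_eq_single_of_mem v (Finset.mem_univ v)]
  · simp
  · intro b _ hb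
    simp [hb]

lemma divg_eq_sum (n : ℕ) (g : Fin n × Fin n → ℝ) (F : Finset (Fin n × Fin n))
    (hsupp : ∀ e ∉ F, g e = 0) (v : Fin n) :
    divg n g v = ∑ e ∈ F, g e * ((if e.1 = v then (1:ℝ) else 0) - (if e.2 = v then 1 else 0)) := by
  have h1 : ∑ e ∈ F, g e * ((if e.1 = v then (1:ℝ) else 0) - (if e.2 = v then 1 else 0))
      = ∑ e ∈ Finset.univ ×ˢ Finset.univ,
          g e * ((if e.1 = v then (1:ℝ) else 0) - (if e.2 = v then 1 else 0)) := by
    apply Finset.sum_subset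
    · intro e _; simp
    · intro e _ he; rw [hsupp e he]; ring
  rw [h1]
  have h2 : ∀ e : Fin n × Fin n,
      g e * ((if e.1 = v then (1:ℝ) else 0) - (if e.2 = v then 1 else 0))
        = (if e.1 = v then g e else 0) - (if e.2 = v then g e else 0) := by
    intro e
    by_cases h : e.1 = v <;> by_cases h' : e.2 = v <;> simp [h, h'] <;> ring
  simp_rw [h2]
  rw [Finset.sum_sub_distrib, sum_fst_eq, sum_snd_eq]
  rfl

noncomputable def phiMap (n : ℕ) (F : Finset (Fin n × Fin n)) (W : Finset (Fin n)) :
    (↥F → ℝ) →ₗ[ℝ] (↥W → ℝ) where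
  toFun c v := ∑ e : ↥F, c e *
    ((if (e : Fin n × Fin n).1 = ↑v then (1:ℝ) else 0) -
      (if (e : Fin n × Fin n).2 = ↑v then 1 else 0))
  map_add' c d := by
    funext v
    simp [add_mul, Finset.sum_add_distrib]
  map_smul' t c := by
    funext v
    simp [Finset.mul_sum, mul_assoc]

lemma exists_circulation (n : ℕ) (F : Finset (Fin n × Fin n))
    (hne : F.Nonempty)
    (hdeg : ∀ v, (F.filter (fun e => e.1 = v)).card + (F.filter (fun e => e.2 = v)).card ≠ 1) :
    ∃ g : Fin n × Fin n → ℝ, (∃ e, g e ≠ 0) ∧ (∀ e ∉ F, g e = 0) ∧ ∀ v, divg n g v = 0 := by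
  classical
  set VF : Finset (Fin n) := F.image Prod.fst ∪ F.image Prod.snd with hVF
  obtain ⟨e₀, he₀⟩ := hne
  have hv₀ : e₀.1 ∈ VF := by
    simp only [hVF, Finset.mem_union, Finset.mem_image]
    exact Or.inl ⟨e₀, he₀, rfl⟩
  set v₀ := e₀.1
  set W : Finset (Fin n) := VF.erase v₀ with hW
  -- degree ≥ 2 on VF
  have hdeg2 : ∀ v ∈ VF, 2 ≤ (F.filter (fun e => e.1 = v)).card + (F.filter (fun e => e.2 = v)).card := by
    intro v hv
    have hpos : 0 < (F.filter (fun e => e.1 = v)).card + (F.filter (fun e => e.2 = v)).card := by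
      simp only [hVF, Finset.mem_union, Finset.mem_image] at hv
      rcases hv with ⟨e, he, hev⟩ | ⟨e, he, hev⟩
      · have : e ∈ F.filter (fun e => e.1 = v) := Finset.mem_filter.2 ⟨he, hev⟩
        have := Finset.card_pos.2 ⟨e, this⟩
        omega
      · have : e ∈ F.filter (fun e => e.2 = v) := Finset.mem_filter.2 ⟨he, hev⟩
        have := Finset.card_pos.2 ⟨e, this⟩
        omega
    have := hdeg v
    omega
  -- |VF| ≤ |F|
  have hcard : VF.card ≤ F.card := by
    have h1 : F.card = ∑ v ∈ Finset.univ, (F.filter (fun e => e.1 = v)).card :=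
      Finset.card_eq_sum_card_fiberwise (fun e _ => Finset.mem_univ _)
    have h2 : F.card = ∑ v ∈ Finset.univ, (F.filter (fun e => e.2 = v)).card :=
      Finset.card_eq_sum_card_fiberwise (fun e _ => Finset.mem_univ _)
    have h3 : VF.card • 2 ≤ ∑ v ∈ VF,
        ((F.filter (fun e => e.1 = v)).card + (F.filter (fun e => e.2 = v)).card) :=
      Finset.card_nsmul_le_sum _ _ _ hdeg2
    rw [Finset.sum_add_distrib] at h3
    have h4a : ∑ v ∈ VF, (F.filter (fun e => e.1 = v)).card
        ≤ ∑ v ∈ Finset.univ, (F.filter (fun e => e.1 = v)).card :=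
      Finset.sum_le_sum_of_subset (Finset.subset_univ _)
    have h4b : ∑ v ∈ VF, (F.filter (fun e => e.2 = v)).card
        ≤ ∑ v ∈ Finset.univ, (F.filter (fun e => e.2 = v)).card :=
      Finset.sum_le_sum_of_subset (Finset.subset_univ _)
    simp only [smul_eq_mul] at h3
    omega
  -- the linear map is not injective
  have hnotinj : ¬ Function.Injective (phiMap n F W) := by
    intro hinj
    have := LinearMap.finrank_le_finrank_of_injective hinj
    rw [Module.finrank_pi, Module.finrank_pi] at this
    simp only [Fintype.card_coe] at this
    have hWc : W.card = VF.card - 1 := by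
      rw [hW, Finset.card_erase_of_mem hv₀]
    have hVFpos : 0 < VF.card := Finset.card_pos.2 ⟨v₀, hv₀⟩
    omega
  rw [Function.not_injective_iff] at hnotinj
  obtain ⟨c₁, c₂, hceq, hcne⟩ := hnotinj
  set c : ↥F → ℝ := c₁ - c₂ with hc
  have hphic : phiMap n F W c = 0 := by
    rw [hc, map_sub, hceq, sub_self]
  have hcnz : c ≠ 0 := sub_ne_zero_of_ne hcne
  set g : Fin n × Fin n → ℝ := fun e => if h : e ∈ F then c ⟨e, h⟩ else 0 with hg
  have hsupp : ∀ e ∉ F, g e = 0 := by intro e he; simp [hg, he]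
  have hdiv : ∀ v, divg n g v = ∑ e : ↥F, c e *
      ((if (e : Fin n × Fin n).1 = v then (1:ℝ) else 0) -
        (if (e : Fin n × Fin n).2 = v then 1 else 0)) := by
    intro v
    rw [divg_eq_sum n g F hsupp v, ← Finset.sum_attach F]
    apply Finset.sum_congr rfl
    intro e _
    simp [hg]
  refine ⟨g, ?_, hsupp, ?_⟩
  · obtain ⟨e', he'⟩ := Function.ne_iff.1 hcnz
    refine ⟨↑e', ?_⟩
    simpa [hg, e'.2] using he'
  · -- divergence zero everywhere
    have hzeroW : ∀ v ∈ W, divg n g v = 0 := by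
      intro v hv
      rw [hdiv v]
      have := congrFun hphic ⟨v, hv⟩
      simpa [phiMap] using this
    have hzeroOut : ∀ v, v ∉ VF → divg n g v = 0 := by
      intro v hv
      rw [hdiv v]
      apply Finset.sum_eq_zero
      intro e _
      have h1 : (e : Fin n × Fin n).1 ≠ v := by
        intro h; apply hv
        simp only [hVF, Finset.mem_union, Finset.mem_image]
        exact Or.inl ⟨↑e, e.2, h⟩
      have h2 : (e : Fin n × Fin n).2 ≠ v := by
        intro h; apply hv
        simp only [hVF, Finset.mem_union, Finset.mem_image]
        exact Or.inr ⟨↑e, e.2, h⟩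
      simp [h1, h2]
    have hne0 : ∀ v, v ≠ v₀ → divg n g v = 0 := by
      intro v hv
      by_cases h : v ∈ VF
      · exact hzeroW v (Finset.mem_erase.2 ⟨hv, h⟩)
      · exact hzeroOut v h
    intro v
    by_cases h : v = v₀
    · subst h
      have := sum_divg_zero n g
      rw [Finset.sum_eq_single_of_mem v₀ (Finset.mem_univ v₀)
        (fun b _ hb => hne0 b hb)] at this
      exact this
    · exact hne0 v h

def IsInt (t : ℝ) : Prop := ∃ m : ℤ, t = (m : ℝ)

lemma IsInt.add {a b : ℝ} (ha : IsInt a) (hb : IsInt b) : IsInt (a + b) := by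
  obtain ⟨m, rfl⟩ := ha; obtain ⟨k, rfl⟩ := hb; exact ⟨m + k, by push_cast; ring⟩

lemma IsInt.sub {a b : ℝ} (ha : IsInt a) (hb : IsInt b) : IsInt (a - b) := by
  obtain ⟨m, rfl⟩ := ha; obtain ⟨k, rfl⟩ := hb; exact ⟨m - k, by push_cast; ring⟩

lemma IsInt.sum {α : Type*} {s : Finset α} {f : α → ℝ} (h : ∀ i ∈ s, IsInt (f i)) :
    IsInt (∑ i ∈ s, f i) := by
  classical
  induction s using Finset.induction_on with
  | empty => exact ⟨0, by simp⟩
  | insert _ _ hx ih =>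
    rw [Finset.sum_insert hx]
    exact (h _ (Finset.mem_insert_self _ _)).add
      (ih fun i hi => h i (Finset.mem_insert_of_mem hi))

lemma exists_integral_aux (n : ℕ) (E : Finset (Fin n × Fin n)) (hE : E ⊆ E0 n)
    (d : Fin n → ℤ) :
    ∀ k : ℕ, ∀ x : Fin n × Fin n → ℝ,
      (E.filter (fun e => x e ≠ 0 ∧ x e ≠ 1)).card = k → memFlowPolytope n E d x →
      ∃ S, S ⊆ E ∧ memFlowPolytope n E d (ind n S) := by
  intro k
  induction k using Nat.strong_induction_on with
  | _ k IH =>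
  intro x hcard hx
  set F := E.filter (fun e => x e ≠ 0 ∧ x e ≠ 1) with hF
  by_cases h0 : k = 0
  · -- x is already integral
    subst h0
    have hFe : F = ∅ := Finset.card_eq_zero.1 hcard
    refine ⟨E.filter (fun e => x e = 1), Finset.filter_subset _ _, ?_⟩
    have hxe : ind n (E.filter (fun e => x e = 1)) = x := by
      funext e
      by_cases he : e ∈ E
      · by_cases h1 : x e = 1
        · simp [ind, Finset.mem_filter, he, h1]
        · have h01 : x e = 0 := by
            by_contra h2
            have : e ∈ F := Finset.mem_filter.2 ⟨he, h2, h1⟩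
            rw [hFe] at this; exact absurd this (Finset.notMem_empty e)
          simp [ind, Finset.mem_filter, h1, h01]
      · simp [ind, Finset.mem_filter, he, hx.1 e he]
    rw [hxe]; exact hx
  · -- F is nonempty; find a circulation supported on F and push
    have hFne : F.Nonempty := by
      rw [← Finset.card_pos, hcard]; omega
    have hFE : F ⊆ E := Finset.filter_subset _ _
    have hFint : ∀ e, e ∉ F → IsInt (x e) := by
      intro e he
      by_cases heE : e ∈ E
      · rcases Classical.em (x e = 0) with h | h
        · exact ⟨0, by simp [h]⟩
        · have h1 : x e = 1 := by
            by_contra h1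
            exact he (Finset.mem_filter.2 ⟨heE, h, h1⟩)
          exact ⟨1, by simp [h1]⟩
      · exact ⟨0, by simp [hx.1 e heE]⟩
    have hdeg : ∀ v, (F.filter (fun e => e.1 = v)).card
        + (F.filter (fun e => e.2 = v)).card ≠ 1 := by
      intro v hc
      -- exactly one fractional arc incident to v
      set U := F.filter (fun e => e.1 = v ∨ e.2 = v) with hU
      have hUcard : U.card = 1 := by
        have hdisj : Disjoint (F.filter (fun e => e.1 = v)) (F.filter (fun e => e.2 = v)) := by
          rw [Finset.disjoint_left]
          intro e h1 h2
          have he1 := (Finset.mem_filter.1 h1).2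
          have he2 := (Finset.mem_filter.1 h2).2
          have heE0 : e ∈ E0 n := hE (hFE (Finset.mem_filter.1 h1).1)
          have := (Finset.mem_filter.1 heE0).2
          exact this (he1.trans he2.symm)
        have hun : U = F.filter (fun e => e.1 = v) ∪ F.filter (fun e => e.2 = v) := by
          rw [hU, Finset.filter_or]
        rw [hun, Finset.card_union_of_disjoint hdisj, hc]
      obtain ⟨a, ha⟩ := Finset.card_eq_one.1 hUcard
      have haU : a ∈ U := by rw [ha]; exact Finset.mem_singleton_self a
      have haF : a ∈ F := (Finset.mem_filter.1 haU).1
      have haE0 : a ∈ E0 n := hE (hFE haF)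
      have hane : a.1 ≠ a.2 := (Finset.mem_filter.1 haE0).2
      have hUeq : ∀ e ∈ F, (e.1 = v ∨ e.2 = v) → e = a := by
        intro e heF hev
        have : e ∈ U := Finset.mem_filter.2 ⟨heF, hev⟩
        rw [ha] at this; exact Finset.mem_singleton.1 this
      have hcons := hx.2.2 v
      have hxa : IsInt (x a) := by
        rcases (Finset.mem_filter.1 haU).2 with ha1 | ha2
        · -- a = (v, a.2)
          have haeq : a = (v, a.2) := by rw [← ha1]
          have hA : (∑ i, x (v, i)) = x (v, a.2) + ∑ i ∈ Finset.univ.erase a.2, x (v, i) :=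
            (Finset.add_sum_erase _ (fun i => x (v, i)) (Finset.mem_univ a.2)).symm
          have hrest : IsInt (∑ i ∈ Finset.univ.erase a.2, x (v, i)) := by
            apply IsInt.sum
            intro i hi
            apply hFint
            intro hmem
            have h := hUeq _ hmem (Or.inl rfl)
            exact (Finset.mem_erase.1 hi).1 (congrArg Prod.snd h)
          have hB : IsInt (∑ i, x (i, v)) := by
            apply IsInt.sum
            intro i _
            apply hFint
            intro hmem
            have hiv := hUeq _ hmem (Or.inr rfl)
            exact hane (ha1.trans (congrArg Prod.snd hiv))
          have : x (v, a.2) = (d v : ℝ) + (∑ i, x (i, v)) - ∑ i ∈ Finset.univ.erase a.2, x (v, i) := by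
            rw [hA] at hcons; linarith
          rw [haeq, this]
          exact (IsInt.add ⟨d v, rfl⟩ hB).sub hrest
        · -- a = (a.1, v)
          have haeq : a = (a.1, v) := by rw [← ha2]
          have hA : (∑ i, x (i, v)) = x (a.1, v) + ∑ i ∈ Finset.univ.erase a.1, x (i, v) :=
            (Finset.add_sum_erase _ (fun i => x (i, v)) (Finset.mem_univ a.1)).symm
          have hrest : IsInt (∑ i ∈ Finset.univ.erase a.1, x (i, v)) := by
            apply IsInt.sum
            intro i hi
            apply hFint
            intro hmem
            have h := hUeq _ hmem (Or.inr rfl)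
            exact (Finset.mem_erase.1 hi).1 (congrArg Prod.fst h)
          have hB : IsInt (∑ i, x (v, i)) := by
            apply IsInt.sum
            intro i _
            apply hFint
            intro hmem
            have hvi := hUeq _ hmem (Or.inl rfl)
            exact hane ((congrArg Prod.fst hvi).symm.trans ha2.symm)
          have : x (a.1, v) = (∑ i, x (v, i)) - (d v : ℝ) - ∑ i ∈ Finset.univ.erase a.1, x (i, v) := by
            rw [hA] at hcons; linarith
          rw [haeq, this]
          exact (IsInt.sub hB ⟨d v, rfl⟩).sub hrest
      obtain ⟨m, hm⟩ := hxa
      have haE : a ∈ E := hFE haF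
      have hIcc := hx.2.1 a haE
      have hm0 : (0:ℝ) ≤ m := by rw [← hm]; exact hIcc.1
      have hm1 : (m:ℝ) ≤ 1 := by rw [← hm]; exact hIcc.2
      have hm0' : (0:ℤ) ≤ m := by exact_mod_cast hm0
      have hm1' : m ≤ 1 := by exact_mod_cast hm1
      have hfr := (Finset.mem_filter.1 haF).2
      interval_cases m
      · exact hfr.1 (by simpa using hm)
      · exact hfr.2 (by simpa using hm)
    obtain ⟨g, ⟨e', hge'⟩, hgsupp, hgdiv⟩ := exists_circulation n F hFne hdeg
    set s := F.filter (fun e => g e ≠ 0) with hs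
    have hsne : s.Nonempty := by
      refine ⟨e', Finset.mem_filter.2 ⟨?_, hge'⟩⟩
      by_contra h
      exact hge' (hgsupp e' h)
    set τ : Fin n × Fin n → ℝ := fun e => if 0 < g e then (1 - x e) / g e else x e / (-g e)
      with hτ
    have hopen : ∀ e ∈ F, 0 < x e ∧ x e < 1 := by
      intro e he
      have h1 := (Finset.mem_filter.1 he).2
      have h2 := hx.2.1 e (hFE he)
      exact ⟨lt_of_le_of_ne h2.1 (Ne.symm h1.1), lt_of_le_of_ne h2.2 h1.2⟩
    have hτpos : ∀ e ∈ s, 0 < τ e := by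
      intro e he
      have heF := (Finset.mem_filter.1 he).1
      have hgne := (Finset.mem_filter.1 he).2
      obtain ⟨hx0, hx1⟩ := hopen e heF
      rw [hτ]
      by_cases hpos : 0 < g e
      · simp only [hpos, if_true]
        exact div_pos (by linarith) hpos
      · simp only [hpos, if_false]
        have : g e < 0 := lt_of_le_of_ne (not_lt.1 hpos) hgne
        exact div_pos hx0 (by linarith)
    set t := s.inf' hsne τ with ht
    have htpos : 0 < t := (Finset.lt_inf'_iff hsne).2 hτpos
    obtain ⟨estar, hestar, htstar⟩ := Finset.exists_mem_eq_inf' hsne τ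
    set x' : Fin n × Fin n → ℝ := fun e => x e + t * g e with hx'
    have hgE : ∀ e, e ∉ E → g e = 0 := fun e he => hgsupp e (fun hf => he (hFE hf))
    have hx'mem : memFlowPolytope n E d x' := by
      refine ⟨?_, ?_, ?_⟩
      · intro e he
        rw [hx']
        simp only []
        rw [hx.1 e he, hgE e he]; ring
      · intro e heE
        by_cases hge : g e = 0
        · rw [hx']; simp only [hge, mul_zero, add_zero]; exact hx.2.1 e heE
        · have heF : e ∈ F := by
            by_contra h
            exact hge (hgsupp e h)
          have hes : e ∈ s := Finset.mem_filter.2 ⟨heF, hge⟩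
          have hts : t ≤ τ e := Finset.inf'_le _ hes
          obtain ⟨hx0, hx1⟩ := hopen e heF
          constructor
          · by_cases hpos : 0 < g e
            · have : 0 ≤ t * g e := le_of_lt (mul_pos htpos hpos)
              rw [hx']; simp only []; linarith
            · have hneg : g e < 0 := lt_of_le_of_ne (not_lt.1 hpos) hge
              have hτe : τ e = x e / (-g e) := by rw [hτ]; simp [hpos]
              have : t * (-g e) ≤ τ e * (-g e) :=
                mul_le_mul_of_nonneg_right hts (by linarith)
              rw [hτe, div_mul_cancel₀ _ (by linarith : -g e ≠ 0)] at this
              rw [hx']; simp only []; nlinarith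
          · by_cases hpos : 0 < g e
            · have hτe : τ e = (1 - x e) / g e := by rw [hτ]; simp [hpos]
              have : t * g e ≤ τ e * g e := mul_le_mul_of_nonneg_right hts (le_of_lt hpos)
              rw [hτe, div_mul_cancel₀ _ (ne_of_gt hpos)] at this
              rw [hx']; simp only []; linarith
            · have hneg : g e < 0 := lt_of_le_of_ne (not_lt.1 hpos) hge
              have : t * g e ≤ 0 := le_of_lt (mul_neg_of_pos_of_neg htpos hneg)
              rw [hx']; simp only []; linarith
      · intro v
        have hdv := hgdiv v
        unfold divg at hdv
        have hxv := hx.2.2 v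
        rw [hx']
        simp only []
        rw [Finset.sum_add_distrib, Finset.sum_add_distrib, ← Finset.mul_sum, ← Finset.mul_sum]
        have hmul : t * (∑ i : Fin n, g (v, i)) - t * (∑ i : Fin n, g (i, v)) = 0 := by
          rw [← mul_sub, hdv, mul_zero]
        linarith
    -- the new fractional set is strictly smaller
    set F' := E.filter (fun e => x' e ≠ 0 ∧ x' e ≠ 1) with hF'
    have hF'F : F' ⊆ F := by
      intro e he
      obtain ⟨heE, hfr⟩ := Finset.mem_filter.1 he
      by_contra h
      have hge : g e = 0 := hgsupp e h
      have : x' e = x e := by rw [hx']; simp [hge]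
      obtain ⟨m, hm⟩ := hFint e h
      rcases Classical.em (x e = 0) with h0 | h0
      · exact hfr.1 (by rw [this, h0])
      · have h1 : x e = 1 := by
          by_contra h1
          exact h (Finset.mem_filter.2 ⟨heE, h0, h1⟩)
        exact hfr.2 (by rw [this, h1])
    have hestar' : estar ∉ F' := by
      intro hmem
      have hfr := (Finset.mem_filter.1 hmem).2
      have heF := (Finset.mem_filter.1 hestar).1
      have hge := (Finset.mem_filter.1 hestar).2
      have hteq : t = τ estar := htstar
      by_cases hpos : 0 < g estar
      · have hτe : τ estar = (1 - x estar) / g estar := by rw [hτ]; simp [hpos]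
        apply hfr.2
        rw [hx']
        simp only []
        rw [hteq, hτe, div_mul_cancel₀ _ (ne_of_gt hpos)]
        ring
      · have hneg : g estar < 0 := lt_of_le_of_ne (not_lt.1 hpos) hge
        have hτe : τ estar = x estar / (-g estar) := by rw [hτ]; simp [hpos]
        apply hfr.1
        rw [hx']
        simp only []
        have hcan : x estar / -g estar * g estar = -x estar := by
          rw [div_neg, neg_mul, div_mul_cancel₀ _ hge]
        rw [hteq, hτe]
        rw [hcan]
        ring
    have hlt : F'.card < k := by
      rw [← hcard]
      apply Finset.card_lt_card
      exact Finset.ssubset_iff_of_subset hF'F |>.2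
        ⟨estar, (Finset.mem_filter.1 hestar).1, hestar'⟩
    exact IH F'.card hlt x' rfl hx'mem

lemma exists_integral (n : ℕ) (E : Finset (Fin n × Fin n)) (hE : E ⊆ E0 n)
    (d : Fin n → ℤ) (x : Fin n × Fin n → ℝ) (hx : memFlowPolytope n E d x) :
    ∃ S, S ⊆ E ∧ memFlowPolytope n E d (ind n S) :=
  exists_integral_aux n E hE d _ x rfl hx

/-- directed reachability gives undirected reachability. -/
lemma reach_undir (n : ℕ) (D : Finset (Fin n × Fin n)) (hD : D ⊆ E0 n) {u w : Fin n}
    (h : reachesIn n D u w) : (undirGraph n D).Reachable u w := by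
  induction h with
  | refl => exact SimpleGraph.Reachable.refl _
  | tail hbc hmem ih =>
    refine ih.trans ?_
    have hne : _ := (Finset.mem_filter.1 (hD hmem)).2
    exact (SimpleGraph.Adj.reachable ((undirGraph_adj n D _ _).2 ⟨hne, Or.inl hmem⟩))

/-- The cut lemma: a nonnegative circulation has no flow across the
reachability cut, in either direction. -/
lemma cut_lemma (n : ℕ) (y : Fin n × Fin n → ℝ) (r : Fin n)
    (hnn : ∀ a, 0 ≤ y a) (hcirc : ∀ v, divg n y v = 0)
    (D : Finset (Fin n × Fin n)) (hD : D = (E0 n).filter (fun a => 0 < y a)) :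
    ∀ a b : Fin n, reachesIn n D a r → ¬ reachesIn n D b r → y (a, b) = 0 := by
  classical
  -- claim1: no positive arcs from non-reaching to reaching vertices
  have claim1 : ∀ a b : Fin n, ¬ reachesIn n D a r → reachesIn n D b r → y (a, b) = 0 := by
    intro a b ha hb
    by_contra hy
    have hpos : 0 < y (a, b) := lt_of_le_of_ne (hnn _) (Ne.symm hy)
    have hne : a ≠ b := by
      rintro rfl; exact ha hb
    have hmem : (a, b) ∈ D := by
      rw [hD]; exact Finset.mem_filter.2 ⟨Finset.mem_filter.2 ⟨Finset.mem_univ _, hne⟩, hpos⟩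
    exact ha (Relation.ReflTransGen.head hmem hb)
  set R : Finset (Fin n) := Finset.univ.filter (fun v => reachesIn n D v r) with hR
  set C : Finset (Fin n) := Finset.univ.filter (fun v => ¬ reachesIn n D v r) with hC
  -- total divergence over C is zero
  have hsum : ∑ v ∈ C, divg n y v = 0 := Finset.sum_eq_zero (fun v _ => hcirc v)
  have hexp : ∀ v : Fin n,
      divg n y v = ((∑ i ∈ R, y (v, i)) + (∑ i ∈ C, y (v, i)))
        - ((∑ i ∈ R, y (i, v)) + (∑ i ∈ C, y (i, v))) := by
    intro v
    unfold divg
    rw [← Finset.sum_filter_add_sum_filter_not Finset.univ (fun i => reachesIn n D i r)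
      (fun i => y (v, i)),
      ← Finset.sum_filter_add_sum_filter_not Finset.univ (fun i => reachesIn n D i r)
      (fun i => y (i, v))]
  have hCC : ∑ v ∈ C, ∑ i ∈ C, y (v, i) = ∑ v ∈ C, ∑ i ∈ C, y (i, v) :=
    Finset.sum_comm
  have hCR : ∑ v ∈ C, ∑ i ∈ R, y (v, i) = 0 := by
    apply Finset.sum_eq_zero
    intro v hv
    apply Finset.sum_eq_zero
    intro i hi
    exact claim1 v i (Finset.mem_filter.1 hv).2 (Finset.mem_filter.1 hi).2
  have hRC : ∑ v ∈ C, ∑ i ∈ R, y (i, v) = 0 := by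
    have h1 : ∑ v ∈ C, divg n y v
        = (∑ v ∈ C, ∑ i ∈ R, y (v, i)) + (∑ v ∈ C, ∑ i ∈ C, y (v, i))
          - ((∑ v ∈ C, ∑ i ∈ R, y (i, v)) + (∑ v ∈ C, ∑ i ∈ C, y (i, v))) := by
      rw [Finset.sum_congr rfl (fun v _ => hexp v)]
      rw [Finset.sum_sub_distrib, Finset.sum_add_distrib, Finset.sum_add_distrib]
    rw [hsum, hCR, hCC] at h1
    linarith
  -- conclude
  intro a b ha hb
  have haR : a ∈ R := Finset.mem_filter.2 ⟨Finset.mem_univ _, ha⟩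
  have hbC : b ∈ C := Finset.mem_filter.2 ⟨Finset.mem_univ _, hb⟩
  have h1 : ∀ v ∈ C, ∑ i ∈ R, y (i, v) = 0 := by
    have := (Finset.sum_eq_zero_iff_of_nonneg
      (fun v _ => Finset.sum_nonneg (fun i _ => hnn (i, v)))).1 hRC
    exact this
  have h2 := (Finset.sum_eq_zero_iff_of_nonneg (fun i _ => hnn (i, b))).1 (h1 b hbC)
  exact h2 a haR

/-- length-indexed reachability. -/
def stepsTo (n : ℕ) (D : Finset (Fin n × Fin n)) (r : Fin n) : ℕ → Fin n → Prop
  | 0, v => v = r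
  | (k+1), v => v = r ∨ ∃ w, (v, w) ∈ D ∧ stepsTo n D r k w

lemma reach_steps (n : ℕ) (D : Finset (Fin n × Fin n)) (r : Fin n) {v : Fin n}
    (h : reachesIn n D v r) : ∃ k, stepsTo n D r k v := by
  induction h using Relation.ReflTransGen.head_induction_on with
  | refl => exact ⟨0, rfl⟩
  | head hstep _ ih =>
    obtain ⟨k, hk⟩ := ih
    exact ⟨k + 1, Or.inr ⟨_, hstep, hk⟩⟩

/-- From full reachability, build a spanning arborescence inside `D`. -/
lemma exists_arb (n : ℕ) (hn : 2 ≤ n) (D : Finset (Fin n × Fin n)) (hD : D ⊆ E0 n)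
    (r : Fin n) (hreach : ∀ v, reachesIn n D v r) :
    ∃ A : Finset (Fin n × Fin n), A ⊆ D ∧ IsArb n r A := by
  classical
  have hex : ∀ v, ∃ k, stepsTo n D r k v := fun v => reach_steps n D r (hreach v)
  set rank : Fin n → ℕ := fun v => Nat.find (hex v) with hrank
  have hspec : ∀ v, stepsTo n D r (rank v) v := fun v => Nat.find_spec (hex v)
  have hstep : ∀ v, v ≠ r → ∃ w, (v, w) ∈ D ∧ rank w < rank v := by
    intro v hv
    have h0 : rank v ≠ 0 := by
      intro h
      have := hspec v
      rw [h] at this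
      exact hv this
    obtain ⟨k, hk⟩ : ∃ k, rank v = k + 1 := ⟨rank v - 1, by omega⟩
    have := hspec v
    rw [hk] at this
    rcases this with h | ⟨w, hw, hsw⟩
    · exact absurd h hv
    · refine ⟨w, hw, ?_⟩
      have : rank w ≤ k := Nat.find_min' (hex w) hsw
      omega
  set p : Fin n → Fin n := fun v => if h : v = r then r else Classical.choose (hstep v h)
    with hp
  have hpv : ∀ v (hv : v ≠ r), (v, p v) ∈ D ∧ rank (p v) < rank v := by
    intro v hv
    have : p v = Classical.choose (hstep v hv) := by rw [hp]; simp [hv]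
    rw [this]
    exact Classical.choose_spec (hstep v hv)
  set A : Finset (Fin n × Fin n) := (Finset.univ.erase r).image (fun v => (v, p v)) with hA
  have hAD : A ⊆ D := by
    intro a haA
    obtain ⟨v, hv, rfl⟩ := Finset.mem_image.1 haA
    exact (hpv v (Finset.mem_erase.1 hv).1).1
  have hAcard : A.card = n - 1 := by
    rw [hA, Finset.card_image_of_injOn (fun v _ w _ h => congrArg Prod.fst h),
      Finset.card_erase_of_mem (Finset.mem_univ r), Finset.card_univ, Fintype.card_fin]
  have hAreach : ∀ v, reachesIn n A v r := by
    have key : ∀ k v, rank v ≤ k → reachesIn n A v r := by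
      intro k
      induction k with
      | zero =>
        intro v hv
        have h0 : rank v = 0 := Nat.le_zero.1 hv
        have := hspec v
        rw [h0] at this
        rw [this]
        exact Relation.ReflTransGen.refl
      | succ k ih =>
        intro v hv
        by_cases hvr : v = r
        · rw [hvr]
          exact Relation.ReflTransGen.refl
        · have hmem : (v, p v) ∈ A :=
            Finset.mem_image.2 ⟨v, Finset.mem_erase.2 ⟨hvr, Finset.mem_univ v⟩, rfl⟩
          have hlt := (hpv v hvr).2
          exact Relation.ReflTransGen.head hmem (ih (p v) (by omega))
    exact fun v => key (rank v) v le_rfl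
  have hAE0 : A ⊆ E0 n := hAD.trans hD
  have hconn : (undirGraph n A).Connected := by
    rw [SimpleGraph.connected_iff]
    refine ⟨?_, ⟨r⟩⟩
    intro u v
    exact (reach_undir n A hAE0 (hAreach u)).trans (reach_undir n A hAE0 (hAreach v)).symm
  exact ⟨A, hAD, ⟨hAE0, hAcard, hconn⟩, hAreach⟩

lemma rev_rev {n : ℕ} (e : Fin n × Fin n) : rev (rev e) = e := rfl

/-- condition (4): `∑_f P_{f,r}(x) > 0` on the open part of `P`. -/
theorem sum_Pfr_pos (n : ℕ) (hn : 2 ≤ n)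
    (E : Finset (Fin n × Fin n)) (hE : E ⊆ E0 n) (d : Fin n → ℤ)
    (hconn : (undirGraph n E).Connected)
    (r : Fin n) (x : Fin n × Fin n → ℝ) (hx : memFlowPolytope n E d x)
    (hx01 : ∀ e ∈ E, x e ∈ Set.Ioo (0 : ℝ) 1) :
    0 < ∑ S ∈ flowVertices n E d, Pfr n E (ind n S) r x := by
  classical
  -- step 1: a vertex of the polytope exists
  obtain ⟨S₀, hS₀E, hS₀mem⟩ := exists_integral n E hE d x hx
  -- step 2: the shifted circulation
  set y : Fin n × Fin n → ℝ := fun a =>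
    (if a ∈ E ∧ a ∉ S₀ then x a else 0) + (if rev a ∈ S₀ then 1 - x (rev a) else 0)
    with hy
  have hynn : ∀ a, 0 ≤ y a := by
    intro a
    rw [hy]
    apply add_nonneg
    · by_cases h : a ∈ E ∧ a ∉ S₀
      · simp only [h, if_true]
        exact (hx.2.1 a h.1).1
      · simp [h]
    · by_cases h : rev a ∈ S₀
      · simp only [h, if_true]
        have := (hx.2.1 (rev a) (hS₀E h)).2
        linarith
      · simp [h]
  have hkey : ∀ e : Fin n × Fin n,
      (if e ∈ E ∧ e ∉ S₀ then x e else 0) - (if e ∈ S₀ then 1 - x e else 0)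
        = x e - ind n S₀ e := by
    intro e
    by_cases hS : e ∈ S₀
    · simp only [hS, not_true, and_false, if_false, if_true, ind]
      try ring
    · by_cases heE : e ∈ E
      · simp only [heE, hS, not_false_iff, and_true, if_true, if_false, ind]
        try ring
      · have hx0 : x e = 0 := hx.1 e heE
        simp only [heE, false_and, if_false, hS, ind, hx0]
        try ring
  have hycirc : ∀ v, divg n y v = 0 := by
    intro v
    unfold divg
    have e1 : ∑ i, y (v, i) = (∑ i, (if (v, i) ∈ E ∧ (v, i) ∉ S₀ then x (v, i) else 0))
        + ∑ i, (if (i, v) ∈ S₀ then 1 - x (i, v) else 0) := by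
      rw [← Finset.sum_add_distrib]
      exact Finset.sum_congr rfl (fun i _ => rfl)
    have e2 : ∑ i, y (i, v) = (∑ i, (if (i, v) ∈ E ∧ (i, v) ∉ S₀ then x (i, v) else 0))
        + ∑ i, (if (v, i) ∈ S₀ then 1 - x (v, i) else 0) := by
      rw [← Finset.sum_add_distrib]
      exact Finset.sum_congr rfl (fun i _ => rfl)
    rw [e1, e2]
    have e3 : (∑ i, (if (v, i) ∈ E ∧ (v, i) ∉ S₀ then x (v, i) else 0))
        - (∑ i, (if (v, i) ∈ S₀ then 1 - x (v, i) else 0))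
        = (∑ i, x (v, i)) - (∑ i, ind n S₀ (v, i)) := by
      rw [← Finset.sum_sub_distrib, ← Finset.sum_sub_distrib]
      exact Finset.sum_congr rfl (fun i _ => hkey (v, i))
    have e4 : (∑ i, (if (i, v) ∈ E ∧ (i, v) ∉ S₀ then x (i, v) else 0))
        - (∑ i, (if (i, v) ∈ S₀ then 1 - x (i, v) else 0))
        = (∑ i, x (i, v)) - (∑ i, ind n S₀ (i, v)) := by
      rw [← Finset.sum_sub_distrib, ← Finset.sum_sub_distrib]
      exact Finset.sum_congr rfl (fun i _ => hkey (i, v))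
    have hxv := hx.2.2 v
    have hfv := hS₀mem.2.2 v
    linarith
  -- step 3: reachability in the support of y
  set D : Finset (Fin n × Fin n) := (E0 n).filter (fun a => 0 < y a) with hD
  have hcut := cut_lemma n y r hynn hycirc D hD
  have hbridge : ∀ e ∈ E, 0 < y e ∨ 0 < y (rev e) := by
    intro e he
    by_cases hS : e ∈ S₀
    · right
      rw [hy]
      apply add_pos_of_nonneg_of_pos
      · by_cases h : rev e ∈ E ∧ rev e ∉ S₀
        · simp only [h, if_true]
          exact (hx.2.1 (rev e) h.1).1
        · simp [h]
      · rw [rev_rev]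
        simp only [hS, if_true]
        have := (hx01 e he).2
        linarith
    · left
      rw [hy]
      apply add_pos_of_pos_of_nonneg
      · simp only [he, hS, not_false_iff, and_self, if_true]
        exact (hx01 e he).1
      · by_cases h : rev e ∈ S₀
        · simp only [h, if_true]
          have := (hx.2.1 (rev e) (hS₀E h)).2
          linarith
        · simp [h]
  have hreach : ∀ v, reachesIn n D v r := by
    have hwalk : ∀ u, (undirGraph n E).Walk u r → reachesIn n D u r := by
      intro u w
      induction w with
      | nil => exact Relation.ReflTransGen.refl
      | @cons u b _ h q ih =>
        have hub : u ≠ b := ((undirGraph_adj n E u b).1 h).1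
        have hy' : 0 < y (u, b) ∨ 0 < y (b, u) := by
          rcases ((undirGraph_adj n E u b).1 h).2 with hmem | hmem
          · rcases hbridge _ hmem with h' | h'
            · exact Or.inl h'
            · exact Or.inr h'
          · rcases hbridge _ hmem with h' | h'
            · exact Or.inr h'
            · exact Or.inl h'
        rcases hy' with h' | h'
        · have hmemD : (u, b) ∈ D := by
            rw [hD]
            exact Finset.mem_filter.2 ⟨Finset.mem_filter.2 ⟨Finset.mem_univ _, hub⟩, h'⟩
          exact Relation.ReflTransGen.head hmemD (ih hcut)
        · by_contra hur
          have := hcut b u (ih hcut) hur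
          rw [this] at h'
          exact lt_irrefl 0 h'
    intro v
    exact (hconn.preconnected v r).elim (fun w => hwalk v w)
  -- step 4: the arborescence and its pull-back tree
  obtain ⟨A, hAD, hAarb⟩ := exists_arb n hn D (Finset.filter_subset _ _) r hreach
  set pull : Fin n × Fin n → Fin n × Fin n := fun a =>
    if a ∈ E ∧ a ∉ S₀ then a else rev a with hpull
  have hpullE : ∀ a ∈ A, pull a ∈ E ∧ flipEdge n (ind n S₀) (pull a) = a := by
    intro a haA
    have haD : a ∈ D := hAD haA
    have hya : 0 < y a := (Finset.mem_filter.1 haD).2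
    by_cases hc : a ∈ E ∧ a ∉ S₀
    · have hp : pull a = a := by rw [hpull]; simp [hc]
      refine ⟨by rw [hp]; exact hc.1, ?_⟩
      rw [hp]
      unfold flipEdge
      have : ind n S₀ a = 0 := by simp [ind, hc.2]
      rw [this]
      norm_num
    · have hrS : rev a ∈ S₀ := by
        by_contra hr
        rw [hy] at hya
        simp only [hc, if_false, hr, add_zero] at hya
        exact lt_irrefl 0 hya
      have hp : pull a = rev a := by rw [hpull]; simp [hc]
      refine ⟨by rw [hp]; exact hS₀E hrS, ?_⟩
      rw [hp]
      unfold flipEdge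
      have : ind n S₀ (rev a) = 1 := by simp [ind, hrS]
      rw [this, if_pos rfl, rev_rev]
  set T : Finset (Fin n × Fin n) := A.image pull with hT
  have hTE : T ⊆ E := by
    intro e heT
    obtain ⟨a, haA, rfl⟩ := Finset.mem_image.1 heT
    exact (hpullE a haA).1
  have hflipT : flipSet n (ind n S₀) T = A := by
    rw [hT]
    unfold flipSet
    rw [Finset.image_image]
    refine Eq.trans (Finset.image_congr (g := id) ?_) Finset.image_id
    intro a haA
    exact (hpullE a haA).2
  have hTcard : T.card = n - 1 := by
    rw [hT, Finset.card_image_of_injOn, hAarb.1.2.1]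
    intro a ha b hb hab
    have h1 := (hpullE a ha).2
    have h2 := (hpullE b hb).2
    rw [← h1, ← h2, hab]
  have hTmem : ∀ u v : Fin n, ((u, v) ∈ T ∨ (v, u) ∈ T) ↔ ((u, v) ∈ A ∨ (v, u) ∈ A) := by
    intro u v
    have hdir : ∀ a, pull a = a ∨ pull a = rev a := by
      intro a
      rw [hpull]
      by_cases h : a ∈ E ∧ a ∉ S₀ <;> simp [h]
    constructor
    · rintro (h | h)
      · obtain ⟨a, haA, hpa⟩ := Finset.mem_image.1 h
        rcases hdir a with h' | h'
        · rw [h'] at hpa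
          rw [hpa] at haA
          exact Or.inl haA
        · rw [h'] at hpa
          have ha2 : a = (v, u) := by
            rw [← rev_rev a, hpa]
            rfl
          rw [ha2] at haA
          exact Or.inr haA
      · obtain ⟨a, haA, hpa⟩ := Finset.mem_image.1 h
        rcases hdir a with h' | h'
        · rw [h'] at hpa
          rw [hpa] at haA
          exact Or.inr haA
        · rw [h'] at hpa
          have ha2 : a = (u, v) := by
            rw [← rev_rev a, hpa]
            rfl
          rw [ha2] at haA
          exact Or.inl haA
    · rintro (h | h) <;>
      · have hmem : pull _ ∈ T := Finset.mem_image_of_mem pull h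
        rcases hdir _ with h' | h' <;> rw [h'] at hmem
        · first
            | exact Or.inl hmem
            | exact Or.inr hmem
        · first
            | exact Or.inr hmem
            | exact Or.inl hmem
  have hTgraph : undirGraph n T = undirGraph n A := by
    ext u v
    unfold undirGraph
    simp only []
    constructor
    · rintro ⟨h1, h2⟩
      exact ⟨h1, (hTmem u v).1 h2⟩
    · rintro ⟨h1, h2⟩
      exact ⟨h1, (hTmem u v).2 h2⟩
  have hTdir : IsDirTree n T := by
    refine ⟨hTE.trans hE, hTcard, ?_⟩
    rw [hTgraph]
    exact hAarb.1.2.2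
  -- step 5: positivity
  have hS₀V : S₀ ∈ flowVertices n E d :=
    Finset.mem_filter.2 ⟨Finset.mem_univ _, hS₀E, hS₀mem⟩
  have hfac : ∀ (S : Finset (Fin n × Fin n)), ∀ e ∈ E,
      (0 : ℝ) < (if ind n S e = 1 then x e else 1 - x e) := by
    intro S e he
    obtain ⟨h0, h1⟩ := hx01 e he
    by_cases h : ind n S e = 1 <;> simp [h] <;> linarith
  have hfac' : ∀ (S : Finset (Fin n × Fin n)), ∀ e ∈ E,
      (0 : ℝ) < (if ind n S e = 1 then 1 - x e else x e) := by
    intro S e he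
    obtain ⟨h0, h1⟩ := hx01 e he
    by_cases h : ind n S e = 1 <;> simp [h] <;> linarith
  have hnonneg : ∀ S ∈ flowVertices n E d, 0 ≤ Pfr n E (ind n S) r x := by
    intro S _
    unfold Pfr
    apply mul_nonneg
    · exact le_of_lt (Finset.prod_pos (fun e he => hfac S e he))
    · apply Finset.sum_nonneg
      intro T' hT'
      have hT'E : T' ⊆ E := (Finset.mem_filter.1 hT').2.2.1
      exact le_of_lt (Finset.prod_pos (fun e he => hfac' S e (hT'E he)))
  apply Finset.sum_pos' hnonneg
  refine ⟨S₀, hS₀V, ?_⟩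
  unfold Pfr
  apply mul_pos
  · exact Finset.prod_pos (fun e he => hfac S₀ e he)
  · apply Finset.sum_pos'
    · intro T' hT'
      have hT'E : T' ⊆ E := (Finset.mem_filter.1 hT').2.2.1
      exact le_of_lt (Finset.prod_pos (fun e he => hfac' S₀ e (hT'E he)))
    · refine ⟨T, ?_, ?_⟩
      · refine Finset.mem_filter.2 ⟨Finset.mem_univ _, hTdir, hTE, ?_⟩
        rw [hflipT]
        exact hAarb
      · exact Finset.prod_pos (fun e he => hfac' S₀ e (hTE he))
end

section
/- (ZLS matrices have equal cofactors) Let A be an n×n real matrix such that ∑_{j=1}^n A_{ij} = 0 and ∑_{j=1}^n A_{ji} = 0 for every i ∈ [n]. For r ∈ [n], let A^{(r)} denote the (n−1)×(n−1) submatrix obtained by deleting the r-th row and r-th column of A. Then det(A^{(r)}) = det(A^{(r')}) for all r, r' ∈ [n]. -/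
open Finset

open scoped Classical

/-- ZLS matrices have equal cofactors. -/
theorem zls_equal_cofactors (n : ℕ)
    (A : Matrix (Fin (n + 1)) (Fin (n + 1)) ℝ)
    (hrow : ∀ i, ∑ j, A i j = 0) (hcol : ∀ i, ∑ j, A j i = 0)
    (r r' : Fin (n + 1)) :
    (A.submatrix r.succAbove r.succAbove).det
      = (A.submatrix r'.succAbove r'.succAbove).det := by
  have h1 : (A.submatrix r.succAbove r.succAbove).det
      = ((A.submatrix id r.succAbove).submatrix r.succAbove id).det := by
    rw [Matrix.submatrix_submatrix]; rfl
  have hc : ∑ j, (A.submatrix id r.succAbove) j = 0 := by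
    ext b
    exact (Finset.sum_apply b _ _).trans (hcol (r.succAbove b))
  have h2 := Matrix.submatrix_succAbove_det_eq_negOnePow_submatrix_succAbove_det
    (A.submatrix id r.succAbove) hc r r'
  have h3 : ((A.submatrix id r.succAbove).submatrix r'.succAbove id)
      = ((A.submatrix r'.succAbove id).submatrix id r.succAbove) := by
    rw [Matrix.submatrix_submatrix, Matrix.submatrix_submatrix]; rfl
  have hr : ∀ i, ∑ j, (A.submatrix r'.succAbove id) i j = 0 := by
    intro i; simpa using hrow (r'.succAbove i)
  have h4 := Matrix.submatrix_succAbove_det_eq_negOnePow_submatrix_succAbove_det'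
    (A.submatrix r'.succAbove id) hr r r'
  have h5 : ((A.submatrix r'.succAbove id).submatrix id r'.succAbove)
      = A.submatrix r'.succAbove r'.succAbove := by
    rw [Matrix.submatrix_submatrix]; rfl
  rw [h1, h2, h3, h4, h5, smul_smul, ← Int.negOnePow_add, ← two_mul,
    Int.negOnePow_two_mul, one_smul]
end

section
/- Let P be a flow-based polytope with edge set E, let f be a vertex of P, and let r ∈ [n]. Then for every x : E → ℝ the factorization P_{f,r}(x) = (∏_{e∈E} x_e^{f_e}(1−x_e)^{1−f_e}) · SArb_r(M_f(x)) holds as a polynomial identity. -/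
open Finset

open scoped Classical

lemma connected_card_le {V : Type*} [Fintype V] [DecidableEq V] {G : SimpleGraph V}
    (hG : G.Connected) (U : Finset (Sym2 V)) (hU : ∀ u v : V, G.Adj u v → s(u, v) ∈ U) :
    Fintype.card V ≤ U.card + 1 := by
  obtain ⟨root⟩ := hG.nonempty
  have H : ∀ v : V, v ≠ root → ∃ y, G.Adj v y ∧ G.dist y root + 1 ≤ G.dist v root := by
    intro v hv
    obtain ⟨p, hp⟩ := hG.exists_walk_length_eq_dist v root
    have hpos : 0 < G.dist v root := hG.pos_dist_of_ne hv
    cases p with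
    | nil => rw [SimpleGraph.Walk.length_nil] at hp; omega
    | @cons _ y _ h q =>
      refine ⟨y, h, ?_⟩
      have := SimpleGraph.dist_le q
      rw [SimpleGraph.Walk.length_cons] at hp
      omega
  choose y hy1 hy2 using H
  have hcard : (Finset.univ.erase root).card ≤ U.card := by
    refine Finset.card_le_card_of_injOn
      (fun v => if h : v = root then s(v, v) else s(v, y v h)) ?_ ?_
    · intro v hv
      have hv' : v ≠ root := (Finset.mem_erase.mp hv).1
      simp only [dif_neg hv']
      exact hU _ _ (hy1 v hv')
    · intro a ha b hb hab
      have ha' : a ≠ root := (Finset.mem_erase.mp (Finset.mem_coe.mp ha)).1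
      have hb' : b ≠ root := (Finset.mem_erase.mp (Finset.mem_coe.mp hb)).1
      simp only [dif_neg ha', dif_neg hb'] at hab
      rw [Sym2.eq_iff] at hab
      rcases hab with ⟨h1, _⟩ | ⟨h1, h2⟩
      · exact h1
      · exfalso
        have d1 := hy2 a ha'
        have d2 := hy2 b hb'
        rw [h2] at d1
        rw [← h1] at d2
        omega
  have h1 : (Finset.univ.erase root).card = Fintype.card V - 1 := by
    rw [Finset.card_erase_of_mem (Finset.mem_univ root), Finset.card_univ]
  have h2 : 1 ≤ Fintype.card V := Fintype.card_pos_iff.mpr ⟨root⟩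
  omega

lemma not_both {n : ℕ} {T : Finset (Fin n × Fin n)} (hT : IsDirTree n T)
    {e : Fin n × Fin n} (h1 : e ∈ T) (h2 : rev e ∈ T) : False := by
  have hE0 := hT.1 h1
  rw [E0, Finset.mem_filter] at hE0
  have hne : e ≠ rev e := by
    intro h
    exact hE0.2 (congrArg Prod.fst h)
  set U := (T.erase (rev e)).image (fun p : Fin n × Fin n => Sym2.mk p.1 p.2) with hU
  have hmem : ∀ e' ∈ T, Sym2.mk e'.1 e'.2 ∈ U := by
    intro e' he'
    by_cases h : e' = rev e
    · subst h
      have heq : (Sym2.mk (rev e).1 (rev e).2 : Sym2 (Fin n)) = Sym2.mk e.1 e.2 := by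
        obtain ⟨u, v⟩ := e
        exact Sym2.eq_swap
      rw [heq]
      exact Finset.mem_image_of_mem _ (Finset.mem_erase.mpr ⟨hne, h1⟩)
    · exact Finset.mem_image_of_mem _ (Finset.mem_erase.mpr ⟨h, he'⟩)
  have hcov : ∀ u v : Fin n, (undirGraph n T).Adj u v → s(u, v) ∈ U := by
    intro u v huv
    rcases huv.2 with h | h
    · exact hmem (u, v) h
    · rw [Sym2.eq_swap]
      exact hmem (v, u) h
  have hle := connected_card_le hT.2.2 U hcov
  have hUc : U.card ≤ T.card - 1 := by
    calc U.card ≤ (T.erase (rev e)).card := Finset.card_image_le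
    _ = T.card - 1 := Finset.card_erase_of_mem h2
  have hTpos : 0 < T.card := Finset.card_pos.mpr ⟨e, h1⟩
  have hcardV : Fintype.card (Fin n) = n := Fintype.card_fin n
  have hTc := hT.2.1
  omega

lemma injOn_of_dirTree {n : ℕ} {D : Finset (Fin n × Fin n)} (hD : IsDirTree n D)
    {g : Fin n × Fin n → Fin n × Fin n} (hg : ∀ e ∈ D, g e = e ∨ g e = rev e) :
    Set.InjOn g D := by
  intro a ha b hb hab
  have ha' : a ∈ D := Finset.mem_coe.mp ha
  have hb' : b ∈ D := Finset.mem_coe.mp hb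
  rcases hg a ha' with h1 | h1 <;> rcases hg b hb' with h2 | h2 <;> rw [h1, h2] at hab
  · exact hab
  · exact (not_both hD hb' (hab ▸ ha')).elim
  · exact (not_both hD ha' (by rw [hab]; exact hb')).elim
  · have := congrArg rev hab
    rwa [rev_rev, rev_rev] at this

lemma undirGraph_image {n : ℕ} (D : Finset (Fin n × Fin n)) (g : Fin n × Fin n → Fin n × Fin n)
    (hg : ∀ e ∈ D, g e = e ∨ g e = rev e) : undirGraph n (D.image g) = undirGraph n D := by
  ext u v
  show (u ≠ v ∧ _) ↔ (u ≠ v ∧ _)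
  constructor
  · rintro ⟨hne, h⟩
    refine ⟨hne, ?_⟩
    rcases h with h | h
    · obtain ⟨e', he', hge⟩ := Finset.mem_image.mp h
      rcases hg e' he' with hid | hrev
      · rw [hid] at hge; rw [hge] at he'; exact Or.inl he'
      · rw [hrev] at hge
        have h2 := congrArg rev hge
        rw [rev_rev] at h2
        rw [h2] at he'
        exact Or.inr he'
    · obtain ⟨e', he', hge⟩ := Finset.mem_image.mp h
      rcases hg e' he' with hid | hrev
      · rw [hid] at hge; rw [hge] at he'; exact Or.inr he'
      · rw [hrev] at hge
        have h2 := congrArg rev hge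
        rw [rev_rev] at h2
        rw [h2] at he'
        exact Or.inl he'
  · rintro ⟨hne, h⟩
    refine ⟨hne, ?_⟩
    rcases h with h | h
    · rcases hg (u, v) h with hid | hrev
      · exact Or.inl (Finset.mem_image.mpr ⟨(u, v), h, hid⟩)
      · exact Or.inr (Finset.mem_image.mpr ⟨(u, v), h, hrev⟩)
    · rcases hg (v, u) h with hid | hrev
      · exact Or.inr (Finset.mem_image.mpr ⟨(v, u), h, hid⟩)
      · exact Or.inl (Finset.mem_image.mpr ⟨(v, u), h, hrev⟩)

lemma dirTree_image {n : ℕ} {D : Finset (Fin n × Fin n)} (hD : IsDirTree n D)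
    {g : Fin n × Fin n → Fin n × Fin n} (hg : ∀ e ∈ D, g e = e ∨ g e = rev e) :
    IsDirTree n (D.image g) := by
  refine ⟨?_, ?_, ?_⟩
  · intro e' he'
    obtain ⟨e, he, rfl⟩ := Finset.mem_image.mp he'
    have h0 := hD.1 he
    rw [E0, Finset.mem_filter] at h0 ⊢
    rcases hg e he with h | h <;> rw [h]
    · exact h0
    · exact ⟨Finset.mem_univ _, fun hc => h0.2 hc.symm⟩
  · rw [Finset.card_image_of_injOn (injOn_of_dirTree hD hg)]; exact hD.2.1
  · rw [undirGraph_image D g hg]; exact hD.2.2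

lemma key_sum (n : ℕ) (E : Finset (Fin n × Fin n)) (f x : Fin n × Fin n → ℝ)
    (hf0 : ∀ e, e ∉ E → f e = 0) (hf01 : ∀ e, f e = 0 ∨ f e = 1)
    (hx0 : ∀ e, e ∉ E → x e = 0) (r : Fin n) :
    ∑ T ∈ Finset.univ.filter
        (fun T : Finset (Fin n × Fin n) =>
          IsDirTree n T ∧ T ⊆ E ∧ IsArb n r (flipSet n f T)),
      ∏ e ∈ T, (if f e = 1 then 1 - x e else x e)
    = ∑ A ∈ Finset.univ.filter (fun A : Finset (Fin n × Fin n) => IsArb n r A),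
        ∏ e ∈ A, Mf n f x e := by
  classical
  have hfE : ∀ e, f e = 1 → e ∈ E := by
    intro e h1
    by_contra he
    rw [hf0 e he] at h1
    norm_num at h1
  -- local abbreviations
  set ww : Fin n × Fin n → ℝ := fun e => if f e = 1 then 1 - x e else x e with hww
  set aa : Fin n × Fin n → ℝ := fun e => if f e = 1 then 0 else x e with haa
  set bb : Fin n × Fin n → ℝ := fun e => if f (rev e) = 1 then 1 - x (rev e) else 0 with hbb
  have hMf : ∀ e, Mf n f x e = aa e + bb e := by
    intro e
    rcases hf01 e with h | h <;> rcases hf01 (rev e) with h' | h' <;>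
      simp [Mf, haa, hbb, h, h'] <;> ring
  set Good : (Σ _ : Finset (Fin n × Fin n), Finset (Fin n × Fin n)) → Prop :=
    fun p => (∀ e ∈ p.2, ¬ f e = 1 ∧ e ∈ E) ∧ ∀ e ∈ p.1 \ p.2, f (rev e) = 1 with hGoodDef
  set gm : Finset (Fin n × Fin n) → (Fin n × Fin n) → (Fin n × Fin n) :=
    fun S e => if e ∈ S then e else rev e with hgm
  have hgm_or : ∀ (S : Finset (Fin n × Fin n)) (e : Fin n × Fin n),
      gm S e = e ∨ gm S e = rev e := by
    intro S e
    by_cases h : e ∈ S <;> simp [hgm, h]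
  have hmem_sigma : ∀ p : Σ _ : Finset (Fin n × Fin n), Finset (Fin n × Fin n),
      p ∈ ((Finset.univ.filter (fun A : Finset (Fin n × Fin n) => IsArb n r A)).sigma
            (fun A => A.powerset)).filter Good ↔
        IsArb n r p.1 ∧ p.2 ⊆ p.1 ∧
          ((∀ e ∈ p.2, ¬ f e = 1 ∧ e ∈ E) ∧ ∀ e ∈ p.1 \ p.2, f (rev e) = 1) := by
    intro p
    simp only [Finset.mem_filter, Finset.mem_sigma, Finset.mem_powerset, Finset.mem_univ,
      true_and, hGoodDef]
    tauto
  have hmem_tree : ∀ T : Finset (Fin n × Fin n),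
      T ∈ Finset.univ.filter
        (fun T : Finset (Fin n × Fin n) =>
          IsDirTree n T ∧ T ⊆ E ∧ IsArb n r (flipSet n f T)) ↔
      (IsDirTree n T ∧ T ⊆ E ∧ IsArb n r (flipSet n f T)) := by
    intro T
    simp [Finset.mem_filter]
  have hflipgm : ∀ p : Σ _ : Finset (Fin n × Fin n), Finset (Fin n × Fin n),
      IsArb n r p.1 → p.2 ⊆ p.1 → Good p →
        flipSet n f (p.1.image (gm p.2)) = p.1 := by
    intro p hA hS hG
    rw [flipSet, Finset.image_image]
    have key : ∀ e ∈ p.1, (flipEdge n f ∘ gm p.2) e = e := by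
      intro e he
      by_cases h : e ∈ p.2
      · have hne := (hG.1 e h).1
        simp [Function.comp, hgm, h, flipEdge, hne]
      · have hfe : f (rev e) = 1 := hG.2 e (Finset.mem_sdiff.mpr ⟨he, h⟩)
        simp [Function.comp, hgm, h, flipEdge, hfe, rev_rev]
    calc p.1.image (flipEdge n f ∘ gm p.2) = p.1.image id :=
          Finset.image_congr (fun e he => key e (Finset.mem_coe.mp he))
      _ = p.1 := Finset.image_id
  symm
  calc
    ∑ A ∈ Finset.univ.filter (fun A : Finset (Fin n × Fin n) => IsArb n r A),
        ∏ e ∈ A, Mf n f x e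
      = ∑ A ∈ Finset.univ.filter (fun A : Finset (Fin n × Fin n) => IsArb n r A),
          ∑ S ∈ A.powerset, (∏ e ∈ S, aa e) * ∏ e ∈ A \ S, bb e := by
        refine Finset.sum_congr rfl fun A _ => ?_
        rw [← Finset.prod_add]
        exact Finset.prod_congr rfl fun e _ => hMf e
    _ = ∑ p ∈ (Finset.univ.filter (fun A : Finset (Fin n × Fin n) => IsArb n r A)).sigma
          (fun A => A.powerset),
          (∏ e ∈ p.2, aa e) * ∏ e ∈ p.1 \ p.2, bb e :=
        Finset.sum_sigma' _ _ _
    _ = ∑ p ∈ ((Finset.univ.filter (fun A : Finset (Fin n × Fin n) => IsArb n r A)).sigma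
          (fun A => A.powerset)).filter Good,
          (∏ e ∈ p.2, aa e) * ∏ e ∈ p.1 \ p.2, bb e := by
        refine (Finset.sum_filter_of_ne ?_).symm
        intro p hp hterm
        have h1 : ∏ e ∈ p.2, aa e ≠ 0 := left_ne_zero_of_mul hterm
        have h2 : ∏ e ∈ p.1 \ p.2, bb e ≠ 0 := right_ne_zero_of_mul hterm
        rw [Finset.prod_ne_zero_iff] at h1 h2
        constructor
        · intro e he
          have hae := h1 e he
          by_cases hfe : f e = 1
          · simp [haa, hfe] at hae
          · refine ⟨hfe, ?_⟩
            by_contra heE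
            simp [haa, hfe, hx0 e heE] at hae
        · intro e he
          have hbe := h2 e he
          by_cases hfe : f (rev e) = 1
          · exact hfe
          · simp [hbb, hfe] at hbe
    _ = ∑ T ∈ Finset.univ.filter
          (fun T : Finset (Fin n × Fin n) =>
            IsDirTree n T ∧ T ⊆ E ∧ IsArb n r (flipSet n f T)),
          ∏ e ∈ T, ww e := by
        refine Finset.sum_nbij' (fun p => p.1.image (gm p.2))
          (fun T => ⟨flipSet n f T, T.filter (fun e => ¬ f e = 1)⟩) ?_ ?_ ?_ ?_ ?_
        · -- hi
          intro p hp
          rw [hmem_sigma] at hp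
          obtain ⟨hA, hS, hG⟩ := hp
          rw [hmem_tree]
          refine ⟨dirTree_image hA.1 (fun e _ => hgm_or p.2 e), ?_, ?_⟩
          · intro e' he'
            obtain ⟨e, he, rfl⟩ := Finset.mem_image.mp he'
            by_cases h : e ∈ p.2
            · simpa [hgm, h] using (hG.1 e h).2
            · have hfe : f (rev e) = 1 := hG.2 e (Finset.mem_sdiff.mpr ⟨he, h⟩)
              simpa [hgm, h] using hfE _ hfe
          · rw [hflipgm p hA hS (by rw [hGoodDef]; exact hG)]
            exact hA
        · -- hj
          intro T hT
          rw [hmem_tree] at hT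
          obtain ⟨hDT, hTE, hArb⟩ := hT
          rw [hmem_sigma]
          refine ⟨hArb, ?_, ?_, ?_⟩
          · intro e he
            rw [Finset.mem_filter] at he
            have hfl : flipEdge n f e = e := by simp [flipEdge, he.2]
            simp only [flipSet]
            exact Finset.mem_image.mpr ⟨e, he.1, hfl⟩
          · intro e he
            rw [Finset.mem_filter] at he
            exact ⟨he.2, hTE he.1⟩
          · intro e he
            rw [Finset.mem_sdiff] at he
            obtain ⟨heA, heS⟩ := he
            simp only [flipSet] at heA
            obtain ⟨e', he', hfe⟩ := Finset.mem_image.mp heA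
            by_cases h : f e' = 1
            · have heq : e = rev e' := by rw [← hfe]; simp [flipEdge, h]
              rw [heq, rev_rev]
              exact h
            · have heq : e = e' := by rw [← hfe]; simp [flipEdge, h]
              rw [heq] at heS
              exact absurd (Finset.mem_filter.mpr ⟨he', h⟩) heS
        · -- left inverse
          rintro ⟨A, S⟩ hp
          rw [hmem_sigma] at hp
          obtain ⟨hA, hS, hG⟩ := hp
          have h1 : flipSet n f (A.image (gm S)) = A :=
            hflipgm ⟨A, S⟩ hA hS (by rw [hGoodDef]; exact hG)
          have h2 : (A.image (gm S)).filter (fun e => ¬ f e = 1) = S := by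
            ext e
            simp only [Finset.mem_filter]
            constructor
            · rintro ⟨heI, hfe⟩
              obtain ⟨e', he', rfl⟩ := Finset.mem_image.mp heI
              by_cases h : e' ∈ S
              · simpa [hgm, h] using h
              · have hfr : f (rev e') = 1 := hG.2 e' (Finset.mem_sdiff.mpr ⟨he', h⟩)
                rw [hgm] at hfe
                simp only [h, if_neg] at hfe
                exact absurd hfr (by simpa [hgm, h] using hfe)
            · intro he2
              exact ⟨Finset.mem_image.mpr ⟨e, hS he2, by simp [hgm, he2]⟩, (hG.1 e he2).1⟩
          show (⟨flipSet n f (A.image (gm S)),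
              (A.image (gm S)).filter (fun e => ¬ f e = 1)⟩ :
              Σ _ : Finset (Fin n × Fin n), Finset (Fin n × Fin n)) = ⟨A, S⟩
          rw [h1, h2]
        · -- right inverse
          intro T hT
          rw [hmem_tree] at hT
          obtain ⟨hDT, hTE, hArb⟩ := hT
          show (flipSet n f T).image (gm (T.filter (fun e => ¬ f e = 1))) = T
          rw [flipSet, Finset.image_image]
          have key : ∀ e ∈ T, (gm (T.filter (fun e => ¬ f e = 1)) ∘ flipEdge n f) e = e := by
            intro e he
            by_cases h : f e = 1
            · have hrev : rev e ∉ T.filter (fun e => ¬ f e = 1) := by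
                intro hmem
                exact not_both hDT he (Finset.mem_filter.mp hmem).1
              simp [Function.comp, flipEdge, h, hgm, hrev, rev_rev]
            · have hmem : e ∈ T.filter (fun e => ¬ f e = 1) :=
                Finset.mem_filter.mpr ⟨he, h⟩
              simp [Function.comp, flipEdge, h, hgm, hmem]
          calc T.image (gm (T.filter (fun e => ¬ f e = 1)) ∘ flipEdge n f)
              = T.image id := Finset.image_congr (fun e he => key e (Finset.mem_coe.mp he))
            _ = T := Finset.image_id
        · -- weights
          intro p hp
          rw [hmem_sigma] at hp
          obtain ⟨hA, hS, hG⟩ := hp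
          have hinj : ∀ e ∈ p.1, ∀ e' ∈ p.1, gm p.2 e = gm p.2 e' → e = e' := by
            intro e he e' he' hh
            exact injOn_of_dirTree hA.1 (fun e _ => hgm_or p.2 e)
              (Finset.mem_coe.mpr he) (Finset.mem_coe.mpr he') hh
          rw [Finset.prod_image hinj, ← Finset.prod_sdiff hS]
          conv_rhs => rw [mul_comm]
          congr 1
          · refine Finset.prod_congr rfl fun e he => ?_
            have h := (hG.1 e he).1
            simp [hgm, he, hww, haa, h]
          · refine Finset.prod_congr rfl fun e he => ?_
            have h := hG.2 e he
            have hnot : e ∉ p.2 := (Finset.mem_sdiff.mp he).2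
            simp [hgm, hnot, hww, hbb, h]

/-- factorization `P_{f,r}(x) = (∏_e x_e^{f_e}(1-x_e)^{1-f_e}) ·
SArb_r(M_f(x))`. -/
theorem Pfr_factorization (n : ℕ) (hn : 2 ≤ n)
    (E : Finset (Fin n × Fin n)) (hE : E ⊆ E0 n) (d : Fin n → ℤ)
    (f : Fin n × Fin n → ℝ) (hf : IsVertex n E d f) (r : Fin n)
    (x : Fin n × Fin n → ℝ) (hx0 : ∀ e, e ∉ E → x e = 0) :
    Pfr n E f r x
      = (∏ e ∈ E, if f e = 1 then x e else 1 - x e) * SArb n r (Mf n f x) := by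
  have hf0 : ∀ e, e ∉ E → f e = 0 := hf.1.1
  have hf01 : ∀ e, f e = 0 ∨ f e = 1 := fun e => by
    by_cases he : e ∈ E
    · exact hf.2 e he
    · exact Or.inl (hf0 e he)
  unfold Pfr SArb
  rw [key_sum n E f x hf0 hf01 hx0 r]
end
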